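/- Let G be a graph with a Naji-system solution β, and suppose {a,b,c,d} induces a K₄ which is a K₄-obstruction, i.e., each of the three 4-cycles on {a,b,c,d} is odd with respect to β. Then for each split (A, B) of the induced K₄, there is a split (A', B') of G with A ⊆ A' and B ⊆ B'. -/
import Mathlib

set_option synthInstance.maxSize 40000
set_option synthInstance.maxHeartbeats 4000000
set_option maxHeartbeats 4000000
set_option maxRecDepth 20000

/-- A solution to the Naji system of a graph `G`. -/
def NajiSolution {V : Type*} (G : SimpleGraph V) (β : V → V → ZMod 2) : Prop :=
  (∀ v w : V, G.Adj v w → β v w + β w v = 1) ∧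
  (∀ x v w : V, x ≠ v → x ≠ w → G.Adj v w → ¬G.Adj x v → ¬G.Adj x w →
    β x v + β x w = 0) ∧
  (∀ x v w : V, v ≠ w → G.Adj x v → G.Adj x w → ¬G.Adj v w →
    β v w + β w v + β x v + β x w = 1)

/-- `{a,b,c,d}` induces a `K₄` in `G` and, with respect to `β`, each of its
three 4-cycles is odd. -/
def IsK4Obstruction {V : Type*} (G : SimpleGraph V) (β : V → V → ZMod 2)
    (a b c d : V) : Prop :=
  G.Adj a b ∧ G.Adj a c ∧ G.Adj a d ∧ G.Adj b c ∧ G.Adj b d ∧ G.Adj c d ∧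
  β a b + β b c + β c d + β d a = 1 ∧
  β a b + β b d + β d c + β c a = 1 ∧
  β a c + β c b + β b d + β d a = 1

/-- `(X, Y)` is a split of `G`. -/
def IsSplit {V : Type*} (G : SimpleGraph V) (X Y : Set V) : Prop :=
  X ∪ Y = Set.univ ∧ Disjoint X Y ∧ X.Nontrivial ∧ Y.Nontrivial ∧
  ∀ x₁ ∈ X, ∀ x₂ ∈ X, ∀ y₁ ∈ Y, ∀ y₂ ∈ Y,
    G.Adj x₁ y₁ → G.Adj x₂ y₂ → G.Adj x₁ y₂

namespace NajiSplitAux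

/-! ### Arithmetic cores over `ZMod 2` -/

private lemma zE0 : ∀ A B : ZMod 2, A + B = 0 → A = B := by decide

private lemma zT2 : ∀ w1 w2 A k1 B k2 : ZMod 2,
    w1 + w2 + A + k1 = 1 → w1 + w2 + B + k2 = 1 → A + B = k1 + k2 := by decide

private lemma zT3 : ∀ yx yk1 yk2 k1y k2y xk1 xk2 k1x k2x : ZMod 2,
    xk1 + k1x + yx + yk1 = 1 → xk2 + k2x + yx + yk2 = 1 → xk1 + xk2 = 0 →
    yk1 + k1y = 1 → yk2 + k2y = 1 → k1x + k2x = k1y + k2y := by decide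

private lemma zW0 : ∀ p q xb xc ax bx cx : ZMod 2,
    xb + xc = 0 → xb + bx + ax + p = 1 → xc + cx + ax + q = 1 → bx + cx = p + q := by decide

private lemma zFlip2 : ∀ p q ba ca X : ZMod 2,
    X = ba + ca → p + ba = 1 → q + ca = 1 → X = p + q := by decide

private lemma zFlipL : ∀ X p k q : ZMod 2, X = k + q → p + k = 1 → X = p + q + 1 := by decide

private lemma zFlipR : ∀ X p q l : ZMod 2, X = p + l → q + l = 1 → X = p + q + 1 := by decide

private lemma zCyc : ∀ ab bc cd da bd dc ca ac ad : ZMod 2,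
    ad + da = 1 → ac + ca = 1 → cd + dc = 1 →
    ab + bc + cd + da = 1 → ab + bd + dc + ca = 1 →
    (ab + bc + cd + ad = 0 ∧ ab + bd + cd + ac = 1 ∧ ac + ad + bc + bd = 1) := by decide

private lemma zFab : ∀ q r s t X : ZMod 2,
    X = q + s → X = r + t → q + r + s + t = 1 → False := by decide

private lemma zFac : ∀ p r s u cb X : ZMod 2,
    X = p + cb → X = r + u → s + cb = 1 → p + s + u + r = 0 → False := by decide

private lemma zFad : ∀ p q t u db dc X : ZMod 2,
    X = p + db → X = q + dc → t + db = 1 → u + dc = 1 → p + t + u + q = 1 → False := by decide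

private lemma zFbc : ∀ p q t u ba ca X : ZMod 2,
    X = ba + ca → X = t + u → p + ba = 1 → q + ca = 1 → p + t + u + q = 1 → False := by decide

private lemma zFbd : ∀ p r s u ba da dc X : ZMod 2,
    X = ba + da → X = s + dc → p + ba = 1 → r + da = 1 → u + dc = 1 →
    p + s + u + r = 0 → False := by decide

private lemma zFcd : ∀ q r s t ca cb da db X : ZMod 2,
    X = ca + da → X = cb + db → q + ca = 1 → r + da = 1 → s + cb = 1 → t + db = 1 →
    q + r + s + t = 1 → False := by decide

private lemma zClashAC : ∀ p q r s u bx dx By dy ay : ZMod 2,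
    bx + dx = By + dy → bx + dx = p + r → ay + By = q + s → ay + dy = q + u + 1 →
    p + s + u + r = 0 → False := by decide

private lemma zClashAD : ∀ p q r t u bx cx By cy ay : ZMod 2,
    bx + cx = By + cy → bx + cx = p + q → ay + By = r + t → ay + cy = r + u →
    p + t + u + q = 1 → False := by decide

private lemma zClashBC : ∀ p q t u ax dx ay dy : ZMod 2,
    ax + dx = ay + dy → ax + dx = p + t + 1 → ay + dy = q + u + 1 →
    p + t + u + q = 1 → False := by decide

private lemma zClashBD : ∀ p r s u ax cx ay cy : ZMod 2,
    ax + cx = ay + cy → ax + cx = p + s + 1 → ay + cy = r + u →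
    p + s + u + r = 0 → False := by decide

private lemma zNCA : ∀ p q r s u ax bx dx : ZMod 2,
    ax + bx = q + s → ax + dx = q + u + 1 → bx + dx = p + r →
    p + s + u + r = 0 → False := by decide

private lemma zNCB : ∀ p q t u ax dx : ZMod 2,
    ax + dx = q + u + 1 → ax + dx = p + t + 1 → p + t + u + q = 1 → False := by decide

private lemma zNDA : ∀ p q r t u ax bx cx : ZMod 2,
    ax + bx = r + t → ax + cx = r + u → bx + cx = p + q →
    p + t + u + q = 1 → False := by decide

private lemma zNDB : ∀ p r s u ax cx : ZMod 2,
    ax + cx = r + u → ax + cx = p + s + 1 → p + s + u + r = 0 → False := by decide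

private lemma zPermBC : ∀ ab ba bc cb bd db cd dc ac ca ad da : ZMod 2,
    ab + ba = 1 → ac + ca = 1 → ad + da = 1 → bc + cb = 1 → bd + db = 1 → cd + dc = 1 →
    ab + bc + cd + da = 1 → ab + bd + dc + ca = 1 → ac + cb + bd + da = 1 →
    ac + cd + db + ba = 1 := by decide

private lemma zPermCD : ∀ ab ba bc cb bd db cd dc ac ca ad da : ZMod 2,
    ab + ba = 1 → ac + ca = 1 → ad + da = 1 → bc + cb = 1 → bd + db = 1 → cd + dc = 1 →
    ab + bc + cd + da = 1 → ab + bd + dc + ca = 1 → ac + cb + bd + da = 1 →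
    ad + db + bc + ca = 1 := by decide

end NajiSplitAux
namespace NajiSplitAux

variable {V : Type*}

private def Alike (β : V → V → ZMod 2) (a b c d x : V) : Prop :=
  β b x + β c x = β a b + β a c ∧ β b x + β d x = β a b + β a d

private def Blike (β : V → V → ZMod 2) (a b c d x : V) : Prop :=
  β a x + β c x = β a b + β b c + 1 ∧ β a x + β d x = β a b + β b d + 1

private def Clike (β : V → V → ZMod 2) (a b c d x : V) : Prop :=
  β a x + β b x = β a c + β b c ∧ β a x + β d x = β a c + β c d + 1

private def Dlike (β : V → V → ZMod 2) (a b c d x : V) : Prop :=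
  β a x + β b x = β a d + β b d ∧ β a x + β c x = β a d + β c d

private def TypeA (β : V → V → ZMod 2) (a b c d x : V) : Prop :=
  Alike β a b c d x ∨ Blike β a b c d x

private structure Ctx (G : SimpleGraph V) (β : V → V → ZMod 2) (a b c d : V) : Prop where
  h1 : ∀ v w : V, G.Adj v w → β v w + β w v = 1
  h2 : ∀ x v w : V, x ≠ v → x ≠ w → G.Adj v w → ¬G.Adj x v → ¬G.Adj x w →
    β x v + β x w = 0
  h3 : ∀ x v w : V, v ≠ w → G.Adj x v → G.Adj x w → ¬G.Adj v w →
    β v w + β w v + β x v + β x w = 1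
  hab : G.Adj a b
  hac : G.Adj a c
  had : G.Adj a d
  hbc : G.Adj b c
  hbd : G.Adj b d
  hcd : G.Adj c d
  hS3 : β a b + β b c + β c d + β a d = 0
  hS2 : β a b + β b d + β c d + β a c = 1
  hS1 : β a c + β a d + β b c + β b d = 1

variable {G : SimpleGraph V} {β : V → V → ZMod 2} {a b c d x y : V}

/-! ### Single-vertex class lemmas -/

private lemma wG1a (C : Ctx G β a b c d) (ha : G.Adj x a) (nb : ¬G.Adj x b)
    (nc : ¬G.Adj x c) (nd : ¬G.Adj x d) (eb : x ≠ b) (ec : x ≠ c) (ed : x ≠ d) :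
    Alike β a b c d x := by
  have e1 := C.h2 x b c eb ec C.hbc nb nc
  have e2 := C.h2 x b d eb ed C.hbd nb nd
  have e3 := C.h3 a x b eb ha.symm C.hab nb
  have e4 := C.h3 a x c ec ha.symm C.hac nc
  have e5 := C.h3 a x d ed ha.symm C.had nd
  exact ⟨zW0 _ _ _ _ _ _ _ e1 e3 e4, zW0 _ _ _ _ _ _ _ e2 e3 e5⟩

private lemma wG1b (C : Ctx G β a b c d) (hb : G.Adj x b) (na : ¬G.Adj x a)
    (nc : ¬G.Adj x c) (nd : ¬G.Adj x d) (ea : x ≠ a) (ec : x ≠ c) (ed : x ≠ d) :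
    Blike β a b c d x := by
  have e1 := C.h2 x a c ea ec C.hac na nc
  have e2 := C.h2 x a d ea ed C.had na nd
  have e3 := C.h3 b x a ea hb.symm C.hab.symm na
  have e4 := C.h3 b x c ec hb.symm C.hbc nc
  have e5 := C.h3 b x d ed hb.symm C.hbd nd
  have t1 := zW0 _ _ _ _ _ _ _ e1 e3 e4
  have t2 := zW0 _ _ _ _ _ _ _ e2 e3 e5
  exact ⟨zFlipL _ _ _ _ t1 (C.h1 a b C.hab), zFlipL _ _ _ _ t2 (C.h1 a b C.hab)⟩

private lemma wG1c (C : Ctx G β a b c d) (hc : G.Adj x c) (na : ¬G.Adj x a)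
    (nb : ¬G.Adj x b) (nd : ¬G.Adj x d) (ea : x ≠ a) (eb : x ≠ b) (ed : x ≠ d) :
    Clike β a b c d x := by
  have e1 := C.h2 x a b ea eb C.hab na nb
  have e2 := C.h2 x a d ea ed C.had na nd
  have e3 := C.h3 c x a ea hc.symm C.hac.symm na
  have e4 := C.h3 c x b eb hc.symm C.hbc.symm nb
  have e5 := C.h3 c x d ed hc.symm C.hcd nd
  have t1 := zW0 _ _ _ _ _ _ _ e1 e3 e4
  have t2 := zW0 _ _ _ _ _ _ _ e2 e3 e5
  exact ⟨zFlip2 _ _ _ _ _ t1 (C.h1 a c C.hac) (C.h1 b c C.hbc),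
    zFlipL _ _ _ _ t2 (C.h1 a c C.hac)⟩

private lemma wG1d (C : Ctx G β a b c d) (hd : G.Adj x d) (na : ¬G.Adj x a)
    (nb : ¬G.Adj x b) (nc : ¬G.Adj x c) (ea : x ≠ a) (eb : x ≠ b) (ec : x ≠ c) :
    Dlike β a b c d x := by
  have e1 := C.h2 x a b ea eb C.hab na nb
  have e2 := C.h2 x a c ea ec C.hac na nc
  have e3 := C.h3 d x a ea hd.symm C.had.symm na
  have e4 := C.h3 d x b eb hd.symm C.hbd.symm nb
  have e5 := C.h3 d x c ec hd.symm C.hcd.symm nc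
  have t1 := zW0 _ _ _ _ _ _ _ e1 e3 e4
  have t2 := zW0 _ _ _ _ _ _ _ e2 e3 e5
  exact ⟨zFlip2 _ _ _ _ _ t1 (C.h1 a d C.had) (C.h1 b d C.hbd),
    zFlip2 _ _ _ _ _ t2 (C.h1 a d C.had) (C.h1 c d C.hcd)⟩

private lemma wG1e (C : Ctx G β a b c d) (na : ¬G.Adj x a) (hb : G.Adj x b)
    (hc : G.Adj x c) (hd : G.Adj x d) (ea : x ≠ a) : Alike β a b c d x := by
  have e3 := C.h3 b x a ea hb.symm C.hab.symm na
  have e4 := C.h3 c x a ea hc.symm C.hac.symm na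
  have e5 := C.h3 d x a ea hd.symm C.had.symm na
  have t1 := zT2 _ _ _ _ _ _ e3 e4
  have t2 := zT2 _ _ _ _ _ _ e3 e5
  exact ⟨zFlip2 _ _ _ _ _ t1 (C.h1 a b C.hab) (C.h1 a c C.hac),
    zFlip2 _ _ _ _ _ t2 (C.h1 a b C.hab) (C.h1 a d C.had)⟩

private lemma wG1f (C : Ctx G β a b c d) (nb : ¬G.Adj x b) (ha : G.Adj x a)
    (hc : G.Adj x c) (hd : G.Adj x d) (eb : x ≠ b) : Blike β a b c d x := by
  have e3 := C.h3 a x b eb ha.symm C.hab nb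
  have e4 := C.h3 c x b eb hc.symm C.hbc.symm nb
  have e5 := C.h3 d x b eb hd.symm C.hbd.symm nb
  have t1 := zT2 _ _ _ _ _ _ e3 e4
  have t2 := zT2 _ _ _ _ _ _ e3 e5
  exact ⟨zFlipR _ _ _ _ t1 (C.h1 b c C.hbc), zFlipR _ _ _ _ t2 (C.h1 b d C.hbd)⟩

private lemma wG1g (C : Ctx G β a b c d) (nc : ¬G.Adj x c) (ha : G.Adj x a)
    (hb : G.Adj x b) (hd : G.Adj x d) (ec : x ≠ c) : Clike β a b c d x := by
  have e3 := C.h3 a x c ec ha.symm C.hac nc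
  have e4 := C.h3 b x c ec hb.symm C.hbc nc
  have e5 := C.h3 d x c ec hd.symm C.hcd.symm nc
  have t1 := zT2 _ _ _ _ _ _ e3 e4
  have t2 := zT2 _ _ _ _ _ _ e3 e5
  exact ⟨t1, zFlipR _ _ _ _ t2 (C.h1 c d C.hcd)⟩

private lemma wG1h (C : Ctx G β a b c d) (nd : ¬G.Adj x d) (ha : G.Adj x a)
    (hb : G.Adj x b) (hc : G.Adj x c) (ed : x ≠ d) : Dlike β a b c d x := by
  have e3 := C.h3 a x d ed ha.symm C.had nd
  have e4 := C.h3 b x d ed hb.symm C.hbd nd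
  have e5 := C.h3 c x d ed hc.symm C.hcd nd
  exact ⟨zT2 _ _ _ _ _ _ e3 e4, zT2 _ _ _ _ _ _ e3 e5⟩

end NajiSplitAux
namespace NajiSplitAux

variable {V : Type*} {G : SimpleGraph V} {β : V → V → ZMod 2} {a b c d x y : V}

/-! ### No vertex sees exactly two of the four -/

private lemma wL0ab (C : Ctx G β a b c d) (ha : G.Adj x a) (hb : G.Adj x b)
    (nc : ¬G.Adj x c) (nd : ¬G.Adj x d) (ec : x ≠ c) (ed : x ≠ d) : False := by
  have e1 := C.h3 a x c ec ha.symm C.hac nc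
  have e2 := C.h3 b x c ec hb.symm C.hbc nc
  have e3 := C.h3 a x d ed ha.symm C.had nd
  have e4 := C.h3 b x d ed hb.symm C.hbd nd
  exact zFab _ _ _ _ _ (zT2 _ _ _ _ _ _ e1 e2) (zT2 _ _ _ _ _ _ e3 e4) C.hS1

private lemma wL0ac (C : Ctx G β a b c d) (ha : G.Adj x a) (hc : G.Adj x c)
    (nb : ¬G.Adj x b) (nd : ¬G.Adj x d) (eb : x ≠ b) (ed : x ≠ d) : False := by
  have e1 := C.h3 a x b eb ha.symm C.hab nb
  have e2 := C.h3 c x b eb hc.symm C.hbc.symm nb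
  have e3 := C.h3 a x d ed ha.symm C.had nd
  have e4 := C.h3 c x d ed hc.symm C.hcd nd
  exact zFac _ _ _ _ _ _ (zT2 _ _ _ _ _ _ e1 e2) (zT2 _ _ _ _ _ _ e3 e4)
    (C.h1 b c C.hbc) C.hS3

private lemma wL0ad (C : Ctx G β a b c d) (ha : G.Adj x a) (hd : G.Adj x d)
    (nb : ¬G.Adj x b) (nc : ¬G.Adj x c) (eb : x ≠ b) (ec : x ≠ c) : False := by
  have e1 := C.h3 a x b eb ha.symm C.hab nb
  have e2 := C.h3 d x b eb hd.symm C.hbd.symm nb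
  have e3 := C.h3 a x c ec ha.symm C.hac nc
  have e4 := C.h3 d x c ec hd.symm C.hcd.symm nc
  exact zFad _ _ _ _ _ _ _ (zT2 _ _ _ _ _ _ e1 e2) (zT2 _ _ _ _ _ _ e3 e4)
    (C.h1 b d C.hbd) (C.h1 c d C.hcd) C.hS2

private lemma wL0bc (C : Ctx G β a b c d) (hb : G.Adj x b) (hc : G.Adj x c)
    (na : ¬G.Adj x a) (nd : ¬G.Adj x d) (ea : x ≠ a) (ed : x ≠ d) : False := by
  have e1 := C.h3 b x a ea hb.symm C.hab.symm na
  have e2 := C.h3 c x a ea hc.symm C.hac.symm na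
  have e3 := C.h3 b x d ed hb.symm C.hbd nd
  have e4 := C.h3 c x d ed hc.symm C.hcd nd
  exact zFbc _ _ _ _ _ _ _ (zT2 _ _ _ _ _ _ e1 e2) (zT2 _ _ _ _ _ _ e3 e4)
    (C.h1 a b C.hab) (C.h1 a c C.hac) C.hS2

private lemma wL0bd (C : Ctx G β a b c d) (hb : G.Adj x b) (hd : G.Adj x d)
    (na : ¬G.Adj x a) (nc : ¬G.Adj x c) (ea : x ≠ a) (ec : x ≠ c) : False := by
  have e1 := C.h3 b x a ea hb.symm C.hab.symm na
  have e2 := C.h3 d x a ea hd.symm C.had.symm na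
  have e3 := C.h3 b x c ec hb.symm C.hbc nc
  have e4 := C.h3 d x c ec hd.symm C.hcd.symm nc
  exact zFbd _ _ _ _ _ _ _ _ (zT2 _ _ _ _ _ _ e1 e2) (zT2 _ _ _ _ _ _ e3 e4)
    (C.h1 a b C.hab) (C.h1 a d C.had) (C.h1 c d C.hcd) C.hS3

private lemma wL0cd (C : Ctx G β a b c d) (hc : G.Adj x c) (hd : G.Adj x d)
    (na : ¬G.Adj x a) (nb : ¬G.Adj x b) (ea : x ≠ a) (eb : x ≠ b) : False := by
  have e1 := C.h3 c x a ea hc.symm C.hac.symm na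
  have e2 := C.h3 d x a ea hd.symm C.had.symm na
  have e3 := C.h3 c x b eb hc.symm C.hbc.symm nb
  have e4 := C.h3 d x b eb hd.symm C.hbd.symm nb
  exact zFcd _ _ _ _ _ _ _ _ _ (zT2 _ _ _ _ _ _ e1 e2) (zT2 _ _ _ _ _ _ e3 e4)
    (C.h1 a c C.hac) (C.h1 a d C.had) (C.h1 b c C.hbc) (C.h1 b d C.hbd) C.hS1

/-! ### C/D-like vertices are not of type A -/

private lemma wNotC (C : Ctx G β a b c d) (h : Clike β a b c d x) :
    ¬TypeA β a b c d x := by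
  rintro (hA | hB)
  · exact zNCA _ _ _ _ _ _ _ _ h.1 h.2 hA.2 C.hS3
  · exact zNCB _ _ _ _ _ _ h.2 hB.2 C.hS2

private lemma wNotD (C : Ctx G β a b c d) (h : Dlike β a b c d x) :
    ¬TypeA β a b c d x := by
  rintro (hA | hB)
  · exact zNDA _ _ _ _ _ _ _ _ h.1 h.2 hA.1 C.hS2
  · exact zNDB _ _ _ _ _ _ h.2 hB.1 C.hS3

end NajiSplitAux
namespace NajiSplitAux

variable {V : Type*} {G : SimpleGraph V} {β : V → V → ZMod 2} {a b c d x y f g m : V}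

/-! ### Nonadjacent pairs of "missing one" vertices on opposite sides -/

private lemma wP1ac (C : Ctx G β a b c d)
    (nxa : ¬G.Adj x a) (hxb : G.Adj x b) (hxc : G.Adj x c) (hxd : G.Adj x d) (exa : x ≠ a)
    (nyc : ¬G.Adj y c) (hya : G.Adj y a) (hyb : G.Adj y b) (hyd : G.Adj y d) (eyc : y ≠ c)
    (nxy : ¬G.Adj x y) (exy : x ≠ y) : False := by
  have hx := wG1e C nxa hxb hxc hxd exa
  have hy := wG1g C nyc hya hyb hyd eyc
  have e1 := C.h3 b x y exy hxb.symm hyb.symm nxy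
  have e2 := C.h3 d x y exy hxd.symm hyd.symm nxy
  exact zClashAC _ _ _ _ _ _ _ _ _ _ (zT2 _ _ _ _ _ _ e1 e2) hx.2 hy.1 hy.2 C.hS3

private lemma wP1ad (C : Ctx G β a b c d)
    (nxa : ¬G.Adj x a) (hxb : G.Adj x b) (hxc : G.Adj x c) (hxd : G.Adj x d) (exa : x ≠ a)
    (nyd : ¬G.Adj y d) (hya : G.Adj y a) (hyb : G.Adj y b) (hyc : G.Adj y c) (eyd : y ≠ d)
    (nxy : ¬G.Adj x y) (exy : x ≠ y) : False := by
  have hx := wG1e C nxa hxb hxc hxd exa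
  have hy := wG1h C nyd hya hyb hyc eyd
  have e1 := C.h3 b x y exy hxb.symm hyb.symm nxy
  have e2 := C.h3 c x y exy hxc.symm hyc.symm nxy
  exact zClashAD _ _ _ _ _ _ _ _ _ _ (zT2 _ _ _ _ _ _ e1 e2) hx.1 hy.1 hy.2 C.hS2

private lemma wP1bc (C : Ctx G β a b c d)
    (nxb : ¬G.Adj x b) (hxa : G.Adj x a) (hxc : G.Adj x c) (hxd : G.Adj x d) (exb : x ≠ b)
    (nyc : ¬G.Adj y c) (hya : G.Adj y a) (hyb : G.Adj y b) (hyd : G.Adj y d) (eyc : y ≠ c)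
    (nxy : ¬G.Adj x y) (exy : x ≠ y) : False := by
  have hx := wG1f C nxb hxa hxc hxd exb
  have hy := wG1g C nyc hya hyb hyd eyc
  have e1 := C.h3 a x y exy hxa.symm hya.symm nxy
  have e2 := C.h3 d x y exy hxd.symm hyd.symm nxy
  exact zClashBC _ _ _ _ _ _ _ _ (zT2 _ _ _ _ _ _ e1 e2) hx.2 hy.2 C.hS2

private lemma wP1bd (C : Ctx G β a b c d)
    (nxb : ¬G.Adj x b) (hxa : G.Adj x a) (hxc : G.Adj x c) (hxd : G.Adj x d) (exb : x ≠ b)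
    (nyd : ¬G.Adj y d) (hya : G.Adj y a) (hyb : G.Adj y b) (hyc : G.Adj y c) (eyd : y ≠ d)
    (nxy : ¬G.Adj x y) (exy : x ≠ y) : False := by
  have hx := wG1f C nxb hxa hxc hxd exb
  have hy := wG1h C nyd hya hyb hyc eyd
  have e1 := C.h3 a x y exy hxa.symm hya.symm nxy
  have e2 := C.h3 c x y exy hxc.symm hyc.symm nxy
  exact zClashBD _ _ _ _ _ _ _ _ (zT2 _ _ _ _ _ _ e1 e2) hx.1 hy.2 C.hS3

/-! ### A full vertex nonadjacent to a "missing one" vertex inherits its type -/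

private lemma wP2a (C : Ctx G β a b c d)
    (hfb : G.Adj f b) (hfc : G.Adj f c) (hfd : G.Adj f d)
    (nma : ¬G.Adj m a) (hmb : G.Adj m b) (hmc : G.Adj m c) (hmd : G.Adj m d) (ema : m ≠ a)
    (nfm : ¬G.Adj f m) (efm : f ≠ m) : Alike β a b c d f := by
  have hm := wG1e C nma hmb hmc hmd ema
  have e1 := C.h3 b f m efm hfb.symm hmb.symm nfm
  have e2 := C.h3 c f m efm hfc.symm hmc.symm nfm
  have e3 := C.h3 d f m efm hfd.symm hmd.symm nfm
  exact ⟨(zT2 _ _ _ _ _ _ e1 e2).trans hm.1, (zT2 _ _ _ _ _ _ e1 e3).trans hm.2⟩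

private lemma wP2b (C : Ctx G β a b c d)
    (hfa : G.Adj f a) (hfc : G.Adj f c) (hfd : G.Adj f d)
    (nmb : ¬G.Adj m b) (hma : G.Adj m a) (hmc : G.Adj m c) (hmd : G.Adj m d) (emb : m ≠ b)
    (nfm : ¬G.Adj f m) (efm : f ≠ m) : Blike β a b c d f := by
  have hm := wG1f C nmb hma hmc hmd emb
  have e1 := C.h3 a f m efm hfa.symm hma.symm nfm
  have e2 := C.h3 c f m efm hfc.symm hmc.symm nfm
  have e3 := C.h3 d f m efm hfd.symm hmd.symm nfm
  exact ⟨(zT2 _ _ _ _ _ _ e1 e2).trans hm.1, (zT2 _ _ _ _ _ _ e1 e3).trans hm.2⟩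

private lemma wP2c (C : Ctx G β a b c d)
    (hfa : G.Adj f a) (hfb : G.Adj f b) (hfd : G.Adj f d)
    (nmc : ¬G.Adj m c) (hma : G.Adj m a) (hmb : G.Adj m b) (hmd : G.Adj m d) (emc : m ≠ c)
    (nfm : ¬G.Adj f m) (efm : f ≠ m) : Clike β a b c d f := by
  have hm := wG1g C nmc hma hmb hmd emc
  have e1 := C.h3 a f m efm hfa.symm hma.symm nfm
  have e2 := C.h3 b f m efm hfb.symm hmb.symm nfm
  have e3 := C.h3 d f m efm hfd.symm hmd.symm nfm
  exact ⟨(zT2 _ _ _ _ _ _ e1 e2).trans hm.1, (zT2 _ _ _ _ _ _ e1 e3).trans hm.2⟩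

private lemma wP2d (C : Ctx G β a b c d)
    (hfa : G.Adj f a) (hfb : G.Adj f b) (hfc : G.Adj f c)
    (nmd : ¬G.Adj m d) (hma : G.Adj m a) (hmb : G.Adj m b) (hmc : G.Adj m c) (emd : m ≠ d)
    (nfm : ¬G.Adj f m) (efm : f ≠ m) : Dlike β a b c d f := by
  have hm := wG1h C nmd hma hmb hmc emd
  have e1 := C.h3 a f m efm hfa.symm hma.symm nfm
  have e2 := C.h3 b f m efm hfb.symm hmb.symm nfm
  have e3 := C.h3 c f m efm hfc.symm hmc.symm nfm
  exact ⟨(zT2 _ _ _ _ _ _ e1 e2).trans hm.1, (zT2 _ _ _ _ _ _ e1 e3).trans hm.2⟩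

/-! ### Two nonadjacent full vertices have the same type -/

private lemma wP3 (C : Ctx G β a b c d)
    (hfa : G.Adj f a) (hfb : G.Adj f b) (hfc : G.Adj f c) (hfd : G.Adj f d)
    (hga : G.Adj g a) (hgb : G.Adj g b) (hgc : G.Adj g c) (hgd : G.Adj g d)
    (nfg : ¬G.Adj f g) (efg : f ≠ g) :
    TypeA β a b c d f ↔ TypeA β a b c d g := by
  have ea := C.h3 a f g efg hfa.symm hga.symm nfg
  have eb := C.h3 b f g efg hfb.symm hgb.symm nfg
  have ec := C.h3 c f g efg hfc.symm hgc.symm nfg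
  have ed := C.h3 d f g efg hfd.symm hgd.symm nfg
  have tbc := zT2 _ _ _ _ _ _ eb ec
  have tbd := zT2 _ _ _ _ _ _ eb ed
  have tac := zT2 _ _ _ _ _ _ ea ec
  have tad := zT2 _ _ _ _ _ _ ea ed
  unfold TypeA Alike Blike
  rw [tbc, tbd, tac, tad]

end NajiSplitAux
namespace NajiSplitAux

variable {V : Type*} {G : SimpleGraph V} {β : V → V → ZMod 2} {a b c d x y f : V}

/-! ### Adjacent singly-attached vertices on opposite sides: impossible -/

private lemma wP4ac (C : Ctx G β a b c d)
    (hxa : G.Adj x a) (nxb : ¬G.Adj x b) (nxc : ¬G.Adj x c) (nxd : ¬G.Adj x d)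
    (exb : x ≠ b) (exc : x ≠ c) (exd : x ≠ d)
    (hyc : G.Adj y c) (nya : ¬G.Adj y a) (nyb : ¬G.Adj y b) (nyd : ¬G.Adj y d)
    (eya : y ≠ a) (eyb : y ≠ b) (eyd : y ≠ d)
    (hxy : G.Adj x y) : False := by
  have hx := wG1a C hxa nxb nxc nxd exb exc exd
  have hy := wG1c C hyc nya nyb nyd eya eyb eyd
  have t1 := C.h2 b x y (Ne.symm exb) (Ne.symm eyb) hxy (fun h => nxb h.symm) (fun h => nyb h.symm)
  have t2 := C.h2 d x y (Ne.symm exd) (Ne.symm eyd) hxy (fun h => nxd h.symm) (fun h => nyd h.symm)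
  have t : β b x + β d x = β b y + β d y := by rw [zE0 _ _ t1, zE0 _ _ t2]
  exact zClashAC _ _ _ _ _ _ _ _ _ _ t hx.2 hy.1 hy.2 C.hS3

private lemma wP4ad (C : Ctx G β a b c d)
    (hxa : G.Adj x a) (nxb : ¬G.Adj x b) (nxc : ¬G.Adj x c) (nxd : ¬G.Adj x d)
    (exb : x ≠ b) (exc : x ≠ c) (exd : x ≠ d)
    (hyd : G.Adj y d) (nya : ¬G.Adj y a) (nyb : ¬G.Adj y b) (nyc : ¬G.Adj y c)
    (eya : y ≠ a) (eyb : y ≠ b) (eyc : y ≠ c)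
    (hxy : G.Adj x y) : False := by
  have hx := wG1a C hxa nxb nxc nxd exb exc exd
  have hy := wG1d C hyd nya nyb nyc eya eyb eyc
  have t1 := C.h2 b x y (Ne.symm exb) (Ne.symm eyb) hxy (fun h => nxb h.symm) (fun h => nyb h.symm)
  have t2 := C.h2 c x y (Ne.symm exc) (Ne.symm eyc) hxy (fun h => nxc h.symm) (fun h => nyc h.symm)
  have t : β b x + β c x = β b y + β c y := by rw [zE0 _ _ t1, zE0 _ _ t2]
  exact zClashAD _ _ _ _ _ _ _ _ _ _ t hx.1 hy.1 hy.2 C.hS2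

private lemma wP4bc (C : Ctx G β a b c d)
    (hxb : G.Adj x b) (nxa : ¬G.Adj x a) (nxc : ¬G.Adj x c) (nxd : ¬G.Adj x d)
    (exa : x ≠ a) (exc : x ≠ c) (exd : x ≠ d)
    (hyc : G.Adj y c) (nya : ¬G.Adj y a) (nyb : ¬G.Adj y b) (nyd : ¬G.Adj y d)
    (eya : y ≠ a) (eyb : y ≠ b) (eyd : y ≠ d)
    (hxy : G.Adj x y) : False := by
  have hx := wG1b C hxb nxa nxc nxd exa exc exd
  have hy := wG1c C hyc nya nyb nyd eya eyb eyd
  have t1 := C.h2 a x y (Ne.symm exa) (Ne.symm eya) hxy (fun h => nxa h.symm) (fun h => nya h.symm)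
  have t2 := C.h2 d x y (Ne.symm exd) (Ne.symm eyd) hxy (fun h => nxd h.symm) (fun h => nyd h.symm)
  have t : β a x + β d x = β a y + β d y := by rw [zE0 _ _ t1, zE0 _ _ t2]
  exact zClashBC _ _ _ _ _ _ _ _ t hx.2 hy.2 C.hS2

private lemma wP4bd (C : Ctx G β a b c d)
    (hxb : G.Adj x b) (nxa : ¬G.Adj x a) (nxc : ¬G.Adj x c) (nxd : ¬G.Adj x d)
    (exa : x ≠ a) (exc : x ≠ c) (exd : x ≠ d)
    (hyd : G.Adj y d) (nya : ¬G.Adj y a) (nyb : ¬G.Adj y b) (nyc : ¬G.Adj y c)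
    (eya : y ≠ a) (eyb : y ≠ b) (eyc : y ≠ c)
    (hxy : G.Adj x y) : False := by
  have hx := wG1b C hxb nxa nxc nxd exa exc exd
  have hy := wG1d C hyd nya nyb nyc eya eyb eyc
  have t1 := C.h2 a x y (Ne.symm exa) (Ne.symm eya) hxy (fun h => nxa h.symm) (fun h => nya h.symm)
  have t2 := C.h2 c x y (Ne.symm exc) (Ne.symm eyc) hxy (fun h => nxc h.symm) (fun h => nyc h.symm)
  have t : β a x + β c x = β a y + β c y := by rw [zE0 _ _ t1, zE0 _ _ t2]
  exact zClashBD _ _ _ _ _ _ _ _ t hx.1 hy.2 C.hS3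

/-! ### Adjacent singly-attached vs missing-one, opposite sides: impossible -/

private lemma wP5ac (C : Ctx G β a b c d)
    (hxa : G.Adj x a) (nxb : ¬G.Adj x b) (nxc : ¬G.Adj x c) (nxd : ¬G.Adj x d)
    (exb : x ≠ b) (exc : x ≠ c) (exd : x ≠ d)
    (nyc : ¬G.Adj y c) (hya : G.Adj y a) (hyb : G.Adj y b) (hyd : G.Adj y d) (eyc : y ≠ c)
    (hxy : G.Adj x y) : False := by
  have hx := wG1a C hxa nxb nxc nxd exb exc exd
  have hy := wG1g C nyc hya hyb hyd eyc
  have e1 := C.h3 y x b exb hxy.symm hyb nxb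
  have e2 := C.h3 y x d exd hxy.symm hyd nxd
  have e3 := C.h2 x b d exb exd C.hbd nxb nxd
  have t := zT3 _ _ _ _ _ _ _ _ _ e1 e2 e3 (C.h1 y b hyb) (C.h1 y d hyd)
  exact zClashAC _ _ _ _ _ _ _ _ _ _ t hx.2 hy.1 hy.2 C.hS3

private lemma wP5ad (C : Ctx G β a b c d)
    (hxa : G.Adj x a) (nxb : ¬G.Adj x b) (nxc : ¬G.Adj x c) (nxd : ¬G.Adj x d)
    (exb : x ≠ b) (exc : x ≠ c) (exd : x ≠ d)
    (nyd : ¬G.Adj y d) (hya : G.Adj y a) (hyb : G.Adj y b) (hyc : G.Adj y c) (eyd : y ≠ d)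
    (hxy : G.Adj x y) : False := by
  have hx := wG1a C hxa nxb nxc nxd exb exc exd
  have hy := wG1h C nyd hya hyb hyc eyd
  have e1 := C.h3 y x b exb hxy.symm hyb nxb
  have e2 := C.h3 y x c exc hxy.symm hyc nxc
  have e3 := C.h2 x b c exb exc C.hbc nxb nxc
  have t := zT3 _ _ _ _ _ _ _ _ _ e1 e2 e3 (C.h1 y b hyb) (C.h1 y c hyc)
  exact zClashAD _ _ _ _ _ _ _ _ _ _ t hx.1 hy.1 hy.2 C.hS2

private lemma wP5bc (C : Ctx G β a b c d)
    (hxb : G.Adj x b) (nxa : ¬G.Adj x a) (nxc : ¬G.Adj x c) (nxd : ¬G.Adj x d)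
    (exa : x ≠ a) (exc : x ≠ c) (exd : x ≠ d)
    (nyc : ¬G.Adj y c) (hya : G.Adj y a) (hyb : G.Adj y b) (hyd : G.Adj y d) (eyc : y ≠ c)
    (hxy : G.Adj x y) : False := by
  have hx := wG1b C hxb nxa nxc nxd exa exc exd
  have hy := wG1g C nyc hya hyb hyd eyc
  have e1 := C.h3 y x a exa hxy.symm hya nxa
  have e2 := C.h3 y x d exd hxy.symm hyd nxd
  have e3 := C.h2 x a d exa exd C.had nxa nxd
  have t := zT3 _ _ _ _ _ _ _ _ _ e1 e2 e3 (C.h1 y a hya) (C.h1 y d hyd)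
  exact zClashBC _ _ _ _ _ _ _ _ t hx.2 hy.2 C.hS2

private lemma wP5bd (C : Ctx G β a b c d)
    (hxb : G.Adj x b) (nxa : ¬G.Adj x a) (nxc : ¬G.Adj x c) (nxd : ¬G.Adj x d)
    (exa : x ≠ a) (exc : x ≠ c) (exd : x ≠ d)
    (nyd : ¬G.Adj y d) (hya : G.Adj y a) (hyb : G.Adj y b) (hyc : G.Adj y c) (eyd : y ≠ d)
    (hxy : G.Adj x y) : False := by
  have hx := wG1b C hxb nxa nxc nxd exa exc exd
  have hy := wG1h C nyd hya hyb hyc eyd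
  have e1 := C.h3 y x a exa hxy.symm hya nxa
  have e2 := C.h3 y x c exc hxy.symm hyc nxc
  have e3 := C.h2 x a c exa exc C.hac nxa nxc
  have t := zT3 _ _ _ _ _ _ _ _ _ e1 e2 e3 (C.h1 y a hya) (C.h1 y c hyc)
  exact zClashBD _ _ _ _ _ _ _ _ t hx.1 hy.2 C.hS3

private lemma wP5ca (C : Ctx G β a b c d)
    (hxc : G.Adj x c) (nxa : ¬G.Adj x a) (nxb : ¬G.Adj x b) (nxd : ¬G.Adj x d)
    (exa : x ≠ a) (exb : x ≠ b) (exd : x ≠ d)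
    (nya : ¬G.Adj y a) (hyb : G.Adj y b) (hyc : G.Adj y c) (hyd : G.Adj y d) (eya : y ≠ a)
    (hxy : G.Adj x y) : False := by
  have hx := wG1c C hxc nxa nxb nxd exa exb exd
  have hy := wG1e C nya hyb hyc hyd eya
  have e1 := C.h3 y x b exb hxy.symm hyb nxb
  have e2 := C.h3 y x d exd hxy.symm hyd nxd
  have e3 := C.h2 x b d exb exd C.hbd nxb nxd
  have t := zT3 _ _ _ _ _ _ _ _ _ e1 e2 e3 (C.h1 y b hyb) (C.h1 y d hyd)
  exact zClashAC _ _ _ _ _ _ _ _ _ _ t.symm hy.2 hx.1 hx.2 C.hS3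

private lemma wP5cb (C : Ctx G β a b c d)
    (hxc : G.Adj x c) (nxa : ¬G.Adj x a) (nxb : ¬G.Adj x b) (nxd : ¬G.Adj x d)
    (exa : x ≠ a) (exb : x ≠ b) (exd : x ≠ d)
    (nyb : ¬G.Adj y b) (hya : G.Adj y a) (hyc : G.Adj y c) (hyd : G.Adj y d) (eyb : y ≠ b)
    (hxy : G.Adj x y) : False := by
  have hx := wG1c C hxc nxa nxb nxd exa exb exd
  have hy := wG1f C nyb hya hyc hyd eyb
  have e1 := C.h3 y x a exa hxy.symm hya nxa
  have e2 := C.h3 y x d exd hxy.symm hyd nxd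
  have e3 := C.h2 x a d exa exd C.had nxa nxd
  have t := zT3 _ _ _ _ _ _ _ _ _ e1 e2 e3 (C.h1 y a hya) (C.h1 y d hyd)
  exact zClashBC _ _ _ _ _ _ _ _ t.symm hy.2 hx.2 C.hS2

private lemma wP5da (C : Ctx G β a b c d)
    (hxd : G.Adj x d) (nxa : ¬G.Adj x a) (nxb : ¬G.Adj x b) (nxc : ¬G.Adj x c)
    (exa : x ≠ a) (exb : x ≠ b) (exc : x ≠ c)
    (nya : ¬G.Adj y a) (hyb : G.Adj y b) (hyc : G.Adj y c) (hyd : G.Adj y d) (eya : y ≠ a)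
    (hxy : G.Adj x y) : False := by
  have hx := wG1d C hxd nxa nxb nxc exa exb exc
  have hy := wG1e C nya hyb hyc hyd eya
  have e1 := C.h3 y x b exb hxy.symm hyb nxb
  have e2 := C.h3 y x c exc hxy.symm hyc nxc
  have e3 := C.h2 x b c exb exc C.hbc nxb nxc
  have t := zT3 _ _ _ _ _ _ _ _ _ e1 e2 e3 (C.h1 y b hyb) (C.h1 y c hyc)
  exact zClashAD _ _ _ _ _ _ _ _ _ _ t.symm hy.1 hx.1 hx.2 C.hS2

private lemma wP5db (C : Ctx G β a b c d)
    (hxd : G.Adj x d) (nxa : ¬G.Adj x a) (nxb : ¬G.Adj x b) (nxc : ¬G.Adj x c)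
    (exa : x ≠ a) (exb : x ≠ b) (exc : x ≠ c)
    (nyb : ¬G.Adj y b) (hya : G.Adj y a) (hyc : G.Adj y c) (hyd : G.Adj y d) (eyb : y ≠ b)
    (hxy : G.Adj x y) : False := by
  have hx := wG1d C hxd nxa nxb nxc exa exb exc
  have hy := wG1f C nyb hya hyc hyd eyb
  have e1 := C.h3 y x a exa hxy.symm hya nxa
  have e2 := C.h3 y x c exc hxy.symm hyc nxc
  have e3 := C.h2 x a c exa exc C.hac nxa nxc
  have t := zT3 _ _ _ _ _ _ _ _ _ e1 e2 e3 (C.h1 y a hya) (C.h1 y c hyc)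
  exact zClashBD _ _ _ _ _ _ _ _ t.symm hy.1 hx.2 C.hS3

end NajiSplitAux
namespace NajiSplitAux

variable {V : Type*} {G : SimpleGraph V} {β : V → V → ZMod 2} {a b c d x y f : V}

/-! ### A full vertex adjacent to a singly-attached vertex gets its type -/

private lemma wP6a (C : Ctx G β a b c d)
    (hxa : G.Adj x a) (nxb : ¬G.Adj x b) (nxc : ¬G.Adj x c) (nxd : ¬G.Adj x d)
    (exb : x ≠ b) (exc : x ≠ c) (exd : x ≠ d)
    (hfb : G.Adj f b) (hfc : G.Adj f c) (hfd : G.Adj f d)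
    (hxf : G.Adj x f) : Alike β a b c d f := by
  have hx := wG1a C hxa nxb nxc nxd exb exc exd
  have e1 := C.h3 f x b exb hxf.symm hfb nxb
  have e2 := C.h3 f x c exc hxf.symm hfc nxc
  have e3 := C.h3 f x d exd hxf.symm hfd nxd
  have e4 := C.h2 x b c exb exc C.hbc nxb nxc
  have e5 := C.h2 x b d exb exd C.hbd nxb nxd
  have t1 := zT3 _ _ _ _ _ _ _ _ _ e1 e2 e4 (C.h1 f b hfb) (C.h1 f c hfc)
  have t2 := zT3 _ _ _ _ _ _ _ _ _ e1 e3 e5 (C.h1 f b hfb) (C.h1 f d hfd)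
  exact ⟨t1.symm.trans hx.1, t2.symm.trans hx.2⟩

private lemma wP6b (C : Ctx G β a b c d)
    (hxb : G.Adj x b) (nxa : ¬G.Adj x a) (nxc : ¬G.Adj x c) (nxd : ¬G.Adj x d)
    (exa : x ≠ a) (exc : x ≠ c) (exd : x ≠ d)
    (hfa : G.Adj f a) (hfc : G.Adj f c) (hfd : G.Adj f d)
    (hxf : G.Adj x f) : Blike β a b c d f := by
  have hx := wG1b C hxb nxa nxc nxd exa exc exd
  have e1 := C.h3 f x a exa hxf.symm hfa nxa
  have e2 := C.h3 f x c exc hxf.symm hfc nxc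
  have e3 := C.h3 f x d exd hxf.symm hfd nxd
  have e4 := C.h2 x a c exa exc C.hac nxa nxc
  have e5 := C.h2 x a d exa exd C.had nxa nxd
  have t1 := zT3 _ _ _ _ _ _ _ _ _ e1 e2 e4 (C.h1 f a hfa) (C.h1 f c hfc)
  have t2 := zT3 _ _ _ _ _ _ _ _ _ e1 e3 e5 (C.h1 f a hfa) (C.h1 f d hfd)
  exact ⟨t1.symm.trans hx.1, t2.symm.trans hx.2⟩

private lemma wP6c (C : Ctx G β a b c d)
    (hxc : G.Adj x c) (nxa : ¬G.Adj x a) (nxb : ¬G.Adj x b) (nxd : ¬G.Adj x d)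
    (exa : x ≠ a) (exb : x ≠ b) (exd : x ≠ d)
    (hfa : G.Adj f a) (hfb : G.Adj f b) (hfd : G.Adj f d)
    (hxf : G.Adj x f) : Clike β a b c d f := by
  have hx := wG1c C hxc nxa nxb nxd exa exb exd
  have e1 := C.h3 f x a exa hxf.symm hfa nxa
  have e2 := C.h3 f x b exb hxf.symm hfb nxb
  have e3 := C.h3 f x d exd hxf.symm hfd nxd
  have e4 := C.h2 x a b exa exb C.hab nxa nxb
  have e5 := C.h2 x a d exa exd C.had nxa nxd
  have t1 := zT3 _ _ _ _ _ _ _ _ _ e1 e2 e4 (C.h1 f a hfa) (C.h1 f b hfb)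
  have t2 := zT3 _ _ _ _ _ _ _ _ _ e1 e3 e5 (C.h1 f a hfa) (C.h1 f d hfd)
  exact ⟨t1.symm.trans hx.1, t2.symm.trans hx.2⟩

private lemma wP6d (C : Ctx G β a b c d)
    (hxd : G.Adj x d) (nxa : ¬G.Adj x a) (nxb : ¬G.Adj x b) (nxc : ¬G.Adj x c)
    (exa : x ≠ a) (exb : x ≠ b) (exc : x ≠ c)
    (hfa : G.Adj f a) (hfb : G.Adj f b) (hfc : G.Adj f c)
    (hxf : G.Adj x f) : Dlike β a b c d f := by
  have hx := wG1d C hxd nxa nxb nxc exa exb exc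
  have e1 := C.h3 f x a exa hxf.symm hfa nxa
  have e2 := C.h3 f x b exb hxf.symm hfb nxb
  have e3 := C.h3 f x c exc hxf.symm hfc nxc
  have e4 := C.h2 x a b exa exb C.hab nxa nxb
  have e5 := C.h2 x a c exa exc C.hac nxa nxc
  have t1 := zT3 _ _ _ _ _ _ _ _ _ e1 e2 e4 (C.h1 f a hfa) (C.h1 f b hfb)
  have t2 := zT3 _ _ _ _ _ _ _ _ _ e1 e3 e5 (C.h1 f a hfa) (C.h1 f c hfc)
  exact ⟨t1.symm.trans hx.1, t2.symm.trans hx.2⟩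

/-! ### An isolated-from-K vertex adjacent to a singly-attached vertex -/

private lemma wP7a (C : Ctx G β a b c d)
    (nxa : ¬G.Adj x a) (nxb : ¬G.Adj x b) (nxc : ¬G.Adj x c) (nxd : ¬G.Adj x d)
    (exa : x ≠ a) (exb : x ≠ b) (exc : x ≠ c) (exd : x ≠ d)
    (hya : G.Adj y a) (nyb : ¬G.Adj y b) (nyc : ¬G.Adj y c) (nyd : ¬G.Adj y d)
    (eyb : y ≠ b) (eyc : y ≠ c) (eyd : y ≠ d)
    (hxy : G.Adj x y) : Alike β a b c d x := by
  have hy := wG1a C hya nyb nyc nyd eyb eyc eyd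
  have tb := zE0 _ _ (C.h2 b x y (Ne.symm exb) (Ne.symm eyb) hxy (fun h => nxb h.symm) (fun h => nyb h.symm))
  have tc := zE0 _ _ (C.h2 c x y (Ne.symm exc) (Ne.symm eyc) hxy (fun h => nxc h.symm) (fun h => nyc h.symm))
  have td := zE0 _ _ (C.h2 d x y (Ne.symm exd) (Ne.symm eyd) hxy (fun h => nxd h.symm) (fun h => nyd h.symm))
  exact ⟨by rw [tb, tc]; exact hy.1, by rw [tb, td]; exact hy.2⟩

private lemma wP7b (C : Ctx G β a b c d)
    (nxa : ¬G.Adj x a) (nxb : ¬G.Adj x b) (nxc : ¬G.Adj x c) (nxd : ¬G.Adj x d)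
    (exa : x ≠ a) (exb : x ≠ b) (exc : x ≠ c) (exd : x ≠ d)
    (hyb : G.Adj y b) (nya : ¬G.Adj y a) (nyc : ¬G.Adj y c) (nyd : ¬G.Adj y d)
    (eya : y ≠ a) (eyc : y ≠ c) (eyd : y ≠ d)
    (hxy : G.Adj x y) : Blike β a b c d x := by
  have hy := wG1b C hyb nya nyc nyd eya eyc eyd
  have ta := zE0 _ _ (C.h2 a x y (Ne.symm exa) (Ne.symm eya) hxy (fun h => nxa h.symm) (fun h => nya h.symm))
  have tc := zE0 _ _ (C.h2 c x y (Ne.symm exc) (Ne.symm eyc) hxy (fun h => nxc h.symm) (fun h => nyc h.symm))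
  have td := zE0 _ _ (C.h2 d x y (Ne.symm exd) (Ne.symm eyd) hxy (fun h => nxd h.symm) (fun h => nyd h.symm))
  exact ⟨by rw [ta, tc]; exact hy.1, by rw [ta, td]; exact hy.2⟩

private lemma wP7c (C : Ctx G β a b c d)
    (nxa : ¬G.Adj x a) (nxb : ¬G.Adj x b) (nxc : ¬G.Adj x c) (nxd : ¬G.Adj x d)
    (exa : x ≠ a) (exb : x ≠ b) (exc : x ≠ c) (exd : x ≠ d)
    (hyc : G.Adj y c) (nya : ¬G.Adj y a) (nyb : ¬G.Adj y b) (nyd : ¬G.Adj y d)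
    (eya : y ≠ a) (eyb : y ≠ b) (eyd : y ≠ d)
    (hxy : G.Adj x y) : Clike β a b c d x := by
  have hy := wG1c C hyc nya nyb nyd eya eyb eyd
  have ta := zE0 _ _ (C.h2 a x y (Ne.symm exa) (Ne.symm eya) hxy (fun h => nxa h.symm) (fun h => nya h.symm))
  have tb := zE0 _ _ (C.h2 b x y (Ne.symm exb) (Ne.symm eyb) hxy (fun h => nxb h.symm) (fun h => nyb h.symm))
  have td := zE0 _ _ (C.h2 d x y (Ne.symm exd) (Ne.symm eyd) hxy (fun h => nxd h.symm) (fun h => nyd h.symm))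
  exact ⟨by rw [ta, tb]; exact hy.1, by rw [ta, td]; exact hy.2⟩

private lemma wP7d (C : Ctx G β a b c d)
    (nxa : ¬G.Adj x a) (nxb : ¬G.Adj x b) (nxc : ¬G.Adj x c) (nxd : ¬G.Adj x d)
    (exa : x ≠ a) (exb : x ≠ b) (exc : x ≠ c) (exd : x ≠ d)
    (hyd : G.Adj y d) (nya : ¬G.Adj y a) (nyb : ¬G.Adj y b) (nyc : ¬G.Adj y c)
    (eya : y ≠ a) (eyb : y ≠ b) (eyc : y ≠ c)
    (hxy : G.Adj x y) : Dlike β a b c d x := by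
  have hy := wG1d C hyd nya nyb nyc eya eyb eyc
  have ta := zE0 _ _ (C.h2 a x y (Ne.symm exa) (Ne.symm eya) hxy (fun h => nxa h.symm) (fun h => nya h.symm))
  have tb := zE0 _ _ (C.h2 b x y (Ne.symm exb) (Ne.symm eyb) hxy (fun h => nxb h.symm) (fun h => nyb h.symm))
  have tc := zE0 _ _ (C.h2 c x y (Ne.symm exc) (Ne.symm eyc) hxy (fun h => nxc h.symm) (fun h => nyc h.symm))
  exact ⟨by rw [ta, tb]; exact hy.1, by rw [ta, tc]; exact hy.2⟩

/-! ### An isolated-from-K vertex adjacent to a missing-one vertex -/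

private lemma wP8a (C : Ctx G β a b c d)
    (nxa : ¬G.Adj x a) (nxb : ¬G.Adj x b) (nxc : ¬G.Adj x c) (nxd : ¬G.Adj x d)
    (exb : x ≠ b) (exc : x ≠ c) (exd : x ≠ d)
    (nya : ¬G.Adj y a) (hyb : G.Adj y b) (hyc : G.Adj y c) (hyd : G.Adj y d) (eya : y ≠ a)
    (hxy : G.Adj x y) : Alike β a b c d x := by
  have hy := wG1e C nya hyb hyc hyd eya
  have e1 := C.h3 y x b exb hxy.symm hyb nxb
  have e2 := C.h3 y x c exc hxy.symm hyc nxc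
  have e3 := C.h3 y x d exd hxy.symm hyd nxd
  have e4 := C.h2 x b c exb exc C.hbc nxb nxc
  have e5 := C.h2 x b d exb exd C.hbd nxb nxd
  have t1 := zT3 _ _ _ _ _ _ _ _ _ e1 e2 e4 (C.h1 y b hyb) (C.h1 y c hyc)
  have t2 := zT3 _ _ _ _ _ _ _ _ _ e1 e3 e5 (C.h1 y b hyb) (C.h1 y d hyd)
  exact ⟨t1.trans hy.1, t2.trans hy.2⟩

private lemma wP8b (C : Ctx G β a b c d)
    (nxa : ¬G.Adj x a) (nxb : ¬G.Adj x b) (nxc : ¬G.Adj x c) (nxd : ¬G.Adj x d)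
    (exa : x ≠ a) (exc : x ≠ c) (exd : x ≠ d)
    (nyb : ¬G.Adj y b) (hya : G.Adj y a) (hyc : G.Adj y c) (hyd : G.Adj y d) (eyb : y ≠ b)
    (hxy : G.Adj x y) : Blike β a b c d x := by
  have hy := wG1f C nyb hya hyc hyd eyb
  have e1 := C.h3 y x a exa hxy.symm hya nxa
  have e2 := C.h3 y x c exc hxy.symm hyc nxc
  have e3 := C.h3 y x d exd hxy.symm hyd nxd
  have e4 := C.h2 x a c exa exc C.hac nxa nxc
  have e5 := C.h2 x a d exa exd C.had nxa nxd
  have t1 := zT3 _ _ _ _ _ _ _ _ _ e1 e2 e4 (C.h1 y a hya) (C.h1 y c hyc)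
  have t2 := zT3 _ _ _ _ _ _ _ _ _ e1 e3 e5 (C.h1 y a hya) (C.h1 y d hyd)
  exact ⟨t1.trans hy.1, t2.trans hy.2⟩

private lemma wP8c (C : Ctx G β a b c d)
    (nxa : ¬G.Adj x a) (nxb : ¬G.Adj x b) (nxc : ¬G.Adj x c) (nxd : ¬G.Adj x d)
    (exa : x ≠ a) (exb : x ≠ b) (exd : x ≠ d)
    (nyc : ¬G.Adj y c) (hya : G.Adj y a) (hyb : G.Adj y b) (hyd : G.Adj y d) (eyc : y ≠ c)
    (hxy : G.Adj x y) : Clike β a b c d x := by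
  have hy := wG1g C nyc hya hyb hyd eyc
  have e1 := C.h3 y x a exa hxy.symm hya nxa
  have e2 := C.h3 y x b exb hxy.symm hyb nxb
  have e3 := C.h3 y x d exd hxy.symm hyd nxd
  have e4 := C.h2 x a b exa exb C.hab nxa nxb
  have e5 := C.h2 x a d exa exd C.had nxa nxd
  have t1 := zT3 _ _ _ _ _ _ _ _ _ e1 e2 e4 (C.h1 y a hya) (C.h1 y b hyb)
  have t2 := zT3 _ _ _ _ _ _ _ _ _ e1 e3 e5 (C.h1 y a hya) (C.h1 y d hyd)
  exact ⟨t1.trans hy.1, t2.trans hy.2⟩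

private lemma wP8d (C : Ctx G β a b c d)
    (nxa : ¬G.Adj x a) (nxb : ¬G.Adj x b) (nxc : ¬G.Adj x c) (nxd : ¬G.Adj x d)
    (exa : x ≠ a) (exb : x ≠ b) (exc : x ≠ c)
    (nyd : ¬G.Adj y d) (hya : G.Adj y a) (hyb : G.Adj y b) (hyc : G.Adj y c) (eyd : y ≠ d)
    (hxy : G.Adj x y) : Dlike β a b c d x := by
  have hy := wG1h C nyd hya hyb hyc eyd
  have e1 := C.h3 y x a exa hxy.symm hya nxa
  have e2 := C.h3 y x b exb hxy.symm hyb nxb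
  have e3 := C.h3 y x c exc hxy.symm hyc nxc
  have e4 := C.h2 x a b exa exb C.hab nxa nxb
  have e5 := C.h2 x a c exa exc C.hac nxa nxc
  have t1 := zT3 _ _ _ _ _ _ _ _ _ e1 e2 e4 (C.h1 y a hya) (C.h1 y b hyb)
  have t2 := zT3 _ _ _ _ _ _ _ _ _ e1 e3 e5 (C.h1 y a hya) (C.h1 y c hyc)
  exact ⟨t1.trans hy.1, t2.trans hy.2⟩

/-! ### Isolated-from-K vertex adjacent to a full vertex, or to another such vertex -/

private lemma wP9 (C : Ctx G β a b c d)
    (nxa : ¬G.Adj x a) (nxb : ¬G.Adj x b) (nxc : ¬G.Adj x c) (nxd : ¬G.Adj x d)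
    (exa : x ≠ a) (exb : x ≠ b) (exc : x ≠ c) (exd : x ≠ d)
    (hfa : G.Adj f a) (hfb : G.Adj f b) (hfc : G.Adj f c) (hfd : G.Adj f d)
    (hxf : G.Adj x f) : TypeA β a b c d x ↔ TypeA β a b c d f := by
  have e1 := C.h3 f x a exa hxf.symm hfa nxa
  have e2 := C.h3 f x b exb hxf.symm hfb nxb
  have e3 := C.h3 f x c exc hxf.symm hfc nxc
  have e4 := C.h3 f x d exd hxf.symm hfd nxd
  have eab := C.h2 x a b exa exb C.hab nxa nxb
  have eac := C.h2 x a c exa exc C.hac nxa nxc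
  have ead := C.h2 x a d exa exd C.had nxa nxd
  have ebc := C.h2 x b c exb exc C.hbc nxb nxc
  have ebd := C.h2 x b d exb exd C.hbd nxb nxd
  have tbc := zT3 _ _ _ _ _ _ _ _ _ e2 e3 ebc (C.h1 f b hfb) (C.h1 f c hfc)
  have tbd := zT3 _ _ _ _ _ _ _ _ _ e2 e4 ebd (C.h1 f b hfb) (C.h1 f d hfd)
  have tac := zT3 _ _ _ _ _ _ _ _ _ e1 e3 eac (C.h1 f a hfa) (C.h1 f c hfc)
  have tad := zT3 _ _ _ _ _ _ _ _ _ e1 e4 ead (C.h1 f a hfa) (C.h1 f d hfd)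
  unfold TypeA Alike Blike
  rw [tbc, tbd, tac, tad]

private lemma wP10 (C : Ctx G β a b c d)
    (nxa : ¬G.Adj x a) (nxb : ¬G.Adj x b) (nxc : ¬G.Adj x c) (nxd : ¬G.Adj x d)
    (exa : x ≠ a) (exb : x ≠ b) (exc : x ≠ c) (exd : x ≠ d)
    (nya : ¬G.Adj y a) (nyb : ¬G.Adj y b) (nyc : ¬G.Adj y c) (nyd : ¬G.Adj y d)
    (eya : y ≠ a) (eyb : y ≠ b) (eyc : y ≠ c) (eyd : y ≠ d)
    (hxy : G.Adj x y) : TypeA β a b c d x ↔ TypeA β a b c d y := by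
  have ta := zE0 _ _ (C.h2 a x y (Ne.symm exa) (Ne.symm eya) hxy (fun h => nxa h.symm) (fun h => nya h.symm))
  have tb := zE0 _ _ (C.h2 b x y (Ne.symm exb) (Ne.symm eyb) hxy (fun h => nxb h.symm) (fun h => nyb h.symm))
  have tc := zE0 _ _ (C.h2 c x y (Ne.symm exc) (Ne.symm eyc) hxy (fun h => nxc h.symm) (fun h => nyc h.symm))
  have td := zE0 _ _ (C.h2 d x y (Ne.symm exd) (Ne.symm eyd) hxy (fun h => nxd h.symm) (fun h => nyd h.symm))
  unfold TypeA Alike Blike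
  rw [ta, tb, tc, td]

end NajiSplitAux
namespace NajiSplitAux

set_option linter.unusedVariables false

variable {V : Type*} {G : SimpleGraph V} {β : V → V → ZMod 2} {a b c d x y : V}

/-! ### Classification of external vertices -/

private lemma wClassX (C : Ctx G β a b c d)
    (exa : x ≠ a) (exb : x ≠ b) (exc : x ≠ c) (exd : x ≠ d)
    (hT : TypeA β a b c d x) :
    (G.Adj x a ∧ G.Adj x b ∧ G.Adj x c ∧ G.Adj x d) ∨
    (¬G.Adj x a ∧ G.Adj x b ∧ G.Adj x c ∧ G.Adj x d) ∨
    (G.Adj x a ∧ ¬G.Adj x b ∧ G.Adj x c ∧ G.Adj x d) ∨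
    (G.Adj x a ∧ ¬G.Adj x b ∧ ¬G.Adj x c ∧ ¬G.Adj x d) ∨
    (¬G.Adj x a ∧ G.Adj x b ∧ ¬G.Adj x c ∧ ¬G.Adj x d) ∨
    (¬G.Adj x a ∧ ¬G.Adj x b ∧ ¬G.Adj x c ∧ ¬G.Adj x d) := by
  by_cases ha : G.Adj x a <;> by_cases hb : G.Adj x b <;>
    by_cases hc : G.Adj x c <;> by_cases hd : G.Adj x d
  · exact Or.inl ⟨ha, hb, hc, hd⟩
  · exact absurd hT (wNotD C (wG1h C hd ha hb hc exd))
  · exact absurd hT (wNotC C (wG1g C hc ha hb hd exc))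
  · exact (wL0ab C ha hb hc hd exc exd).elim
  · exact Or.inr (Or.inr (Or.inl ⟨ha, hb, hc, hd⟩))
  · exact (wL0ac C ha hc hb hd exb exd).elim
  · exact (wL0ad C ha hd hb hc exb exc).elim
  · exact Or.inr (Or.inr (Or.inr (Or.inl ⟨ha, hb, hc, hd⟩)))
  · exact Or.inr (Or.inl ⟨ha, hb, hc, hd⟩)
  · exact (wL0bc C hb hc ha hd exa exd).elim
  · exact (wL0bd C hb hd ha hc exa exc).elim
  · exact Or.inr (Or.inr (Or.inr (Or.inr (Or.inl ⟨ha, hb, hc, hd⟩))))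
  · exact (wL0cd C hc hd ha hb exa exb).elim
  · exact absurd hT (wNotC C (wG1c C hc ha hb hd exa exb exd))
  · exact absurd hT (wNotD C (wG1d C hd ha hb hc exa exb exc))
  · exact Or.inr (Or.inr (Or.inr (Or.inr (Or.inr ⟨ha, hb, hc, hd⟩))))

private lemma wClassY (C : Ctx G β a b c d)
    (eya : y ≠ a) (eyb : y ≠ b) (eyc : y ≠ c) (eyd : y ≠ d)
    (hT : ¬TypeA β a b c d y) :
    (G.Adj y a ∧ G.Adj y b ∧ G.Adj y c ∧ G.Adj y d) ∨
    (G.Adj y a ∧ G.Adj y b ∧ ¬G.Adj y c ∧ G.Adj y d) ∨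
    (G.Adj y a ∧ G.Adj y b ∧ G.Adj y c ∧ ¬G.Adj y d) ∨
    (¬G.Adj y a ∧ ¬G.Adj y b ∧ G.Adj y c ∧ ¬G.Adj y d) ∨
    (¬G.Adj y a ∧ ¬G.Adj y b ∧ ¬G.Adj y c ∧ G.Adj y d) ∨
    (¬G.Adj y a ∧ ¬G.Adj y b ∧ ¬G.Adj y c ∧ ¬G.Adj y d) := by
  by_cases ha : G.Adj y a <;> by_cases hb : G.Adj y b <;>
    by_cases hc : G.Adj y c <;> by_cases hd : G.Adj y d
  · exact Or.inl ⟨ha, hb, hc, hd⟩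
  · exact Or.inr (Or.inr (Or.inl ⟨ha, hb, hc, hd⟩))
  · exact Or.inr (Or.inl ⟨ha, hb, hc, hd⟩)
  · exact (wL0ab C ha hb hc hd eyc eyd).elim
  · exact absurd (Or.inr (wG1f C hb ha hc hd eyb) : TypeA β a b c d y) hT
  · exact (wL0ac C ha hc hb hd eyb eyd).elim
  · exact (wL0ad C ha hd hb hc eyb eyc).elim
  · exact absurd (Or.inl (wG1a C ha hb hc hd eyb eyc eyd) : TypeA β a b c d y) hT
  · exact absurd (Or.inl (wG1e C ha hb hc hd eya) : TypeA β a b c d y) hT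
  · exact (wL0bc C hb hc ha hd eya eyd).elim
  · exact (wL0bd C hb hd ha hc eya eyc).elim
  · exact absurd (Or.inr (wG1b C hb ha hc hd eya eyc eyd) : TypeA β a b c d y) hT
  · exact (wL0cd C hc hd ha hb eya eyb).elim
  · exact Or.inr (Or.inr (Or.inr (Or.inl ⟨ha, hb, hc, hd⟩)))
  · exact Or.inr (Or.inr (Or.inr (Or.inr (Or.inl ⟨ha, hb, hc, hd⟩))))
  · exact Or.inr (Or.inr (Or.inr (Or.inr (Or.inr ⟨ha, hb, hc, hd⟩))))

/-! ### Completion of cross-attachments -/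

private lemma wCRC (C : Ctx G β a b c d)
    (exa : x ≠ a) (exb : x ≠ b) (exc : x ≠ c) (exd : x ≠ d)
    (hT : TypeA β a b c d x) (hc : G.Adj x c) : G.Adj x d := by
  by_cases hd : G.Adj x d
  · exact hd
  by_cases ha : G.Adj x a <;> by_cases hb : G.Adj x b
  · exact absurd hT (wNotD C (wG1h C hd ha hb hc exd))
  · exact (wL0ac C ha hc hb hd exb exd).elim
  · exact (wL0bc C hb hc ha hd exa exd).elim
  · exact absurd hT (wNotC C (wG1c C hc ha hb hd exa exb exd))

private lemma wCRD (C : Ctx G β a b c d)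
    (exa : x ≠ a) (exb : x ≠ b) (exc : x ≠ c) (exd : x ≠ d)
    (hT : TypeA β a b c d x) (hd : G.Adj x d) : G.Adj x c := by
  by_cases hc : G.Adj x c
  · exact hc
  by_cases ha : G.Adj x a <;> by_cases hb : G.Adj x b
  · exact absurd hT (wNotC C (wG1g C hc ha hb hd exc))
  · exact (wL0ad C ha hd hb hc exb exc).elim
  · exact (wL0bd C hb hd ha hc exa exc).elim
  · exact absurd hT (wNotD C (wG1d C hd ha hb hc exa exb exc))

private lemma wCRA (C : Ctx G β a b c d)
    (eya : y ≠ a) (eyb : y ≠ b) (eyc : y ≠ c) (eyd : y ≠ d)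
    (hT : ¬TypeA β a b c d y) (ha : G.Adj y a) : G.Adj y b := by
  by_cases hb : G.Adj y b
  · exact hb
  by_cases hc : G.Adj y c <;> by_cases hd : G.Adj y d
  · exact absurd (Or.inr (wG1f C hb ha hc hd eyb) : TypeA β a b c d y) hT
  · exact (wL0ac C ha hc hb hd eyb eyd).elim
  · exact (wL0ad C ha hd hb hc eyb eyc).elim
  · exact absurd (Or.inl (wG1a C ha hb hc hd eyb eyc eyd) : TypeA β a b c d y) hT

private lemma wCRB (C : Ctx G β a b c d)
    (eya : y ≠ a) (eyb : y ≠ b) (eyc : y ≠ c) (eyd : y ≠ d)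
    (hT : ¬TypeA β a b c d y) (hb : G.Adj y b) : G.Adj y a := by
  by_cases ha : G.Adj y a
  · exact ha
  by_cases hc : G.Adj y c <;> by_cases hd : G.Adj y d
  · exact absurd (Or.inl (wG1e C ha hb hc hd eya) : TypeA β a b c d y) hT
  · exact (wL0bc C hb hc ha hd eya eyd).elim
  · exact (wL0bd C hb hd ha hc eya eyc).elim
  · exact absurd (Or.inr (wG1b C hb ha hc hd eya eyc eyd) : TypeA β a b c d y) hT

end NajiSplitAux
namespace NajiSplitAux

set_option linter.unusedVariables false

variable {V : Type*} {G : SimpleGraph V} {β : V → V → ZMod 2} {a b c d x y : V}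

private lemma wCREXT (C : Ctx G β a b c d)
    (exa : x ≠ a) (exb : x ≠ b) (exc : x ≠ c) (exd : x ≠ d)
    (eya : y ≠ a) (eyb : y ≠ b) (eyc : y ≠ c) (eyd : y ≠ d)
    (hTx : TypeA β a b c d x) (hTy : ¬TypeA β a b c d y) (hxy : G.Adj x y) :
    G.Adj x c ∧ G.Adj x d ∧ G.Adj y a ∧ G.Adj y b := by
  rcases wClassX C exa exb exc exd hTx with
    ⟨ha,hb,hc,hd⟩|⟨ha,hb,hc,hd⟩|⟨ha,hb,hc,hd⟩|⟨ha,hb,hc,hd⟩|⟨ha,hb,hc,hd⟩|⟨ha,hb,hc,hd⟩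
  · rcases wClassY C eya eyb eyc eyd hTy with
      ⟨ka,kb,kc,kd⟩|⟨ka,kb,kc,kd⟩|⟨ka,kb,kc,kd⟩|⟨ka,kb,kc,kd⟩|⟨ka,kb,kc,kd⟩|⟨ka,kb,kc,kd⟩
    · exact ⟨hc, hd, ka, kb⟩
    · exact ⟨hc, hd, ka, kb⟩
    · exact ⟨hc, hd, ka, kb⟩
    · exact absurd hTx (wNotC C (wP6c C kc ka kb kd eya eyb eyd ha hb hd hxy.symm))
    · exact absurd hTx (wNotD C (wP6d C kd ka kb kc eya eyb eyc ha hb hc hxy.symm))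
    · exact absurd ((wP9 C ka kb kc kd eya eyb eyc eyd ha hb hc hd hxy.symm).mpr hTx) hTy
  · rcases wClassY C eya eyb eyc eyd hTy with
      ⟨ka,kb,kc,kd⟩|⟨ka,kb,kc,kd⟩|⟨ka,kb,kc,kd⟩|⟨ka,kb,kc,kd⟩|⟨ka,kb,kc,kd⟩|⟨ka,kb,kc,kd⟩
    · exact ⟨hc, hd, ka, kb⟩
    · exact ⟨hc, hd, ka, kb⟩
    · exact ⟨hc, hd, ka, kb⟩
    · exact (wP5ca C kc ka kb kd eya eyb eyd ha hb hc hd exa hxy.symm).elim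
    · exact (wP5da C kd ka kb kc eya eyb eyc ha hb hc hd exa hxy.symm).elim
    · exact absurd (Or.inl (wP8a C ka kb kc kd eyb eyc eyd ha hb hc hd exa hxy.symm) :
        TypeA β a b c d y) hTy
  · rcases wClassY C eya eyb eyc eyd hTy with
      ⟨ka,kb,kc,kd⟩|⟨ka,kb,kc,kd⟩|⟨ka,kb,kc,kd⟩|⟨ka,kb,kc,kd⟩|⟨ka,kb,kc,kd⟩|⟨ka,kb,kc,kd⟩
    · exact ⟨hc, hd, ka, kb⟩
    · exact ⟨hc, hd, ka, kb⟩
    · exact ⟨hc, hd, ka, kb⟩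
    · exact (wP5cb C kc ka kb kd eya eyb eyd hb ha hc hd exb hxy.symm).elim
    · exact (wP5db C kd ka kb kc eya eyb eyc hb ha hc hd exb hxy.symm).elim
    · exact absurd (Or.inr (wP8b C ka kb kc kd eya eyc eyd hb ha hc hd exb hxy.symm) :
        TypeA β a b c d y) hTy
  · rcases wClassY C eya eyb eyc eyd hTy with
      ⟨ka,kb,kc,kd⟩|⟨ka,kb,kc,kd⟩|⟨ka,kb,kc,kd⟩|⟨ka,kb,kc,kd⟩|⟨ka,kb,kc,kd⟩|⟨ka,kb,kc,kd⟩
    · exact absurd (Or.inl (wP6a C ha hb hc hd exb exc exd kb kc kd hxy) :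
        TypeA β a b c d y) hTy
    · exact (wP5ac C ha hb hc hd exb exc exd kc ka kb kd eyc hxy).elim
    · exact (wP5ad C ha hb hc hd exb exc exd kd ka kb kc eyd hxy).elim
    · exact (wP4ac C ha hb hc hd exb exc exd kc ka kb kd eya eyb eyd hxy).elim
    · exact (wP4ad C ha hb hc hd exb exc exd kd ka kb kc eya eyb eyc hxy).elim
    · exact absurd (Or.inl (wP7a C ka kb kc kd eya eyb eyc eyd ha hb hc hd exb exc exd
        hxy.symm) : TypeA β a b c d y) hTy
  · rcases wClassY C eya eyb eyc eyd hTy with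
      ⟨ka,kb,kc,kd⟩|⟨ka,kb,kc,kd⟩|⟨ka,kb,kc,kd⟩|⟨ka,kb,kc,kd⟩|⟨ka,kb,kc,kd⟩|⟨ka,kb,kc,kd⟩
    · exact absurd (Or.inr (wP6b C hb ha hc hd exa exc exd ka kc kd hxy) :
        TypeA β a b c d y) hTy
    · exact (wP5bc C hb ha hc hd exa exc exd kc ka kb kd eyc hxy).elim
    · exact (wP5bd C hb ha hc hd exa exc exd kd ka kb kc eyd hxy).elim
    · exact (wP4bc C hb ha hc hd exa exc exd kc ka kb kd eya eyb eyd hxy).elim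
    · exact (wP4bd C hb ha hc hd exa exc exd kd ka kb kc eya eyb eyc hxy).elim
    · exact absurd (Or.inr (wP7b C ka kb kc kd eya eyb eyc eyd hb ha hc hd exa exc exd
        hxy.symm) : TypeA β a b c d y) hTy
  · rcases wClassY C eya eyb eyc eyd hTy with
      ⟨ka,kb,kc,kd⟩|⟨ka,kb,kc,kd⟩|⟨ka,kb,kc,kd⟩|⟨ka,kb,kc,kd⟩|⟨ka,kb,kc,kd⟩|⟨ka,kb,kc,kd⟩
    · exact absurd ((wP9 C ha hb hc hd exa exb exc exd ka kb kc kd hxy).mp hTx) hTy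
    · exact absurd hTx (wNotC C (wP8c C ha hb hc hd exa exb exd kc ka kb kd eyc hxy))
    · exact absurd hTx (wNotD C (wP8d C ha hb hc hd exa exb exc kd ka kb kc eyd hxy))
    · exact absurd hTx (wNotC C (wP7c C ha hb hc hd exa exb exc exd kc ka kb kd eya eyb eyd hxy))
    · exact absurd hTx (wNotD C (wP7d C ha hb hc hd exa exb exc exd kd ka kb kc eya eyb eyc hxy))
    · exact absurd ((wP10 C ha hb hc hd exa exb exc exd ka kb kc kd eya eyb eyc eyd hxy).mp
        hTx) hTy

private lemma wK2ext (C : Ctx G β a b c d)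
    (exa : x ≠ a) (exb : x ≠ b) (exc : x ≠ c) (exd : x ≠ d)
    (eya : y ≠ a) (eyb : y ≠ b) (eyc : y ≠ c) (eyd : y ≠ d)
    (hTx : TypeA β a b c d x) (hTy : ¬TypeA β a b c d y)
    (hxc : G.Adj x c) (hxd : G.Adj x d) (hya : G.Adj y a) (hyb : G.Adj y b)
    (exy : x ≠ y) : G.Adj x y := by
  by_cases hxy : G.Adj x y
  · exact hxy
  rcases wClassX C exa exb exc exd hTx with
    ⟨ha,hb,hc,hd⟩|⟨ha,hb,hc,hd⟩|⟨ha,hb,hc,hd⟩|⟨ha,hb,hc,hd⟩|⟨ha,hb,hc,hd⟩|⟨ha,hb,hc,hd⟩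
  · rcases wClassY C eya eyb eyc eyd hTy with
      ⟨ka,kb,kc,kd⟩|⟨ka,kb,kc,kd⟩|⟨ka,kb,kc,kd⟩|⟨ka,kb,kc,kd⟩|⟨ka,kb,kc,kd⟩|⟨ka,kb,kc,kd⟩
    · exact absurd ((wP3 C ha hb hc hd ka kb kc kd hxy exy).mp hTx) hTy
    · exact absurd hTx (wNotC C (wP2c C ha hb hd kc ka kb kd eyc hxy exy))
    · exact absurd hTx (wNotD C (wP2d C ha hb hc kd ka kb kc eyd hxy exy))
    · exact absurd hya ka
    · exact absurd hya ka
    · exact absurd hya ka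
  · rcases wClassY C eya eyb eyc eyd hTy with
      ⟨ka,kb,kc,kd⟩|⟨ka,kb,kc,kd⟩|⟨ka,kb,kc,kd⟩|⟨ka,kb,kc,kd⟩|⟨ka,kb,kc,kd⟩|⟨ka,kb,kc,kd⟩
    · exact absurd (Or.inl (wP2a C kb kc kd ha hb hc hd exa (fun h => hxy h.symm)
        (Ne.symm exy)) : TypeA β a b c d y) hTy
    · exact (wP1ac C ha hb hc hd exa kc ka kb kd eyc hxy exy).elim
    · exact (wP1ad C ha hb hc hd exa kd ka kb kc eyd hxy exy).elim
    · exact absurd hya ka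
    · exact absurd hya ka
    · exact absurd hya ka
  · rcases wClassY C eya eyb eyc eyd hTy with
      ⟨ka,kb,kc,kd⟩|⟨ka,kb,kc,kd⟩|⟨ka,kb,kc,kd⟩|⟨ka,kb,kc,kd⟩|⟨ka,kb,kc,kd⟩|⟨ka,kb,kc,kd⟩
    · exact absurd (Or.inr (wP2b C ka kc kd hb ha hc hd exb (fun h => hxy h.symm)
        (Ne.symm exy)) : TypeA β a b c d y) hTy
    · exact (wP1bc C hb ha hc hd exb kc ka kb kd eyc hxy exy).elim
    · exact (wP1bd C hb ha hc hd exb kd ka kb kc eyd hxy exy).elim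
    · exact absurd hya ka
    · exact absurd hya ka
    · exact absurd hya ka
  · exact absurd hxc hc
  · exact absurd hxc hc
  · exact absurd hxc hc

end NajiSplitAux
namespace NajiSplitAux

set_option linter.unusedVariables false

variable {V : Type*} {G : SimpleGraph V} {β : V → V → ZMod 2} {a b c d : V}

private lemma construct
    (h1 : ∀ v w : V, G.Adj v w → β v w + β w v = 1)
    (h2 : ∀ x v w : V, x ≠ v → x ≠ w → G.Adj v w → ¬G.Adj x v → ¬G.Adj x w →
      β x v + β x w = 0)
    (h3 : ∀ x v w : V, v ≠ w → G.Adj x v → G.Adj x w → ¬G.Adj v w →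
      β v w + β w v + β x v + β x w = 1)
    (hobs : IsK4Obstruction G β a b c d) :
    ∃ A' B' : Set V, IsSplit G A' B' ∧ a ∈ A' ∧ b ∈ A' ∧ c ∈ B' ∧ d ∈ B' := by
  classical
  obtain ⟨hab, hac, had, hbc, hbd, hcd, hC1, hC2, hC3⟩ := hobs
  obtain ⟨hS3, hS2, hS1⟩ := zCyc (β a b) (β b c) (β c d) (β d a) (β b d) (β d c)
    (β c a) (β a c) (β a d) (h1 a d had) (h1 a c hac) (h1 c d hcd) hC1 hC2
  have C : Ctx G β a b c d := ⟨h1, h2, h3, hab, hac, had, hbc, hbd, hcd, hS3, hS2, hS1⟩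
  set A' : Set V :=
    {v | v = a ∨ v = b ∨ (v ≠ a ∧ v ≠ b ∧ v ≠ c ∧ v ≠ d ∧ TypeA β a b c d v)} with hA'
  have haA' : a ∈ A' := Or.inl rfl
  have hbA' : b ∈ A' := Or.inr (Or.inl rfl)
  have hcB' : c ∈ A'ᶜ := by
    rintro (h | h | ⟨-, -, h, -⟩)
    · exact hac.ne' h
    · exact hbc.ne' h
    · exact h rfl
  have hdB' : d ∈ A'ᶜ := by
    rintro (h | h | ⟨-, -, -, h, -⟩)
    · exact had.ne' h
    · exact hbd.ne' h
    · exact h rfl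
  -- shape of membership in the complement
  have hBsh : ∀ z : V, z ∈ A'ᶜ →
      z = c ∨ z = d ∨ (z ≠ a ∧ z ≠ b ∧ z ≠ c ∧ z ≠ d ∧ ¬TypeA β a b c d z) := by
    intro z hz
    by_cases h1' : z = c
    · exact Or.inl h1'
    by_cases h2' : z = d
    · exact Or.inr (Or.inl h2')
    have hza : z ≠ a := fun h => hz (Or.inl h)
    have hzb : z ≠ b := fun h => hz (Or.inr (Or.inl h))
    exact Or.inr (Or.inr ⟨hza, hzb, h1', h2',
      fun hT => hz (Or.inr (Or.inr ⟨hza, hzb, h1', h2', hT⟩))⟩)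
  -- cross edges force full attachments
  have hCR : ∀ u v : V, u ∈ A' → v ∈ A'ᶜ → G.Adj u v →
      (G.Adj u c ∧ G.Adj u d) ∧ (G.Adj v a ∧ G.Adj v b) := by
    intro u v hu hv huv
    rcases hBsh v hv with rfl | rfl | ⟨fa, fb, fc, fd, hTv⟩
    · -- v = c
      rcases hu with rfl | rfl | ⟨ea, eb, ec, ed, hTu⟩
      · exact ⟨⟨hac, had⟩, ⟨hac.symm, hbc.symm⟩⟩
      · exact ⟨⟨hbc, hbd⟩, ⟨hac.symm, hbc.symm⟩⟩
      · exact ⟨⟨huv, wCRC C ea eb ec ed hTu huv⟩, ⟨hac.symm, hbc.symm⟩⟩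
    · -- v = d
      rcases hu with rfl | rfl | ⟨ea, eb, ec, ed, hTu⟩
      · exact ⟨⟨hac, had⟩, ⟨had.symm, hbd.symm⟩⟩
      · exact ⟨⟨hbc, hbd⟩, ⟨had.symm, hbd.symm⟩⟩
      · exact ⟨⟨wCRD C ea eb ec ed hTu huv, huv⟩, ⟨had.symm, hbd.symm⟩⟩
    · -- v external
      rcases hu with rfl | rfl | ⟨ea, eb, ec, ed, hTu⟩
      · exact ⟨⟨hac, had⟩, ⟨huv.symm, wCRA C fa fb fc fd hTv huv.symm⟩⟩
      · exact ⟨⟨hbc, hbd⟩, ⟨wCRB C fa fb fc fd hTv huv.symm, huv.symm⟩⟩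
      · obtain ⟨u1, u2, u3, u4⟩ := wCREXT C ea eb ec ed fa fb fc fd hTu hTv huv
        exact ⟨⟨u1, u2⟩, ⟨u3, u4⟩⟩
  -- fully cross-attached vertices on opposite sides are adjacent
  have hK2 : ∀ u v : V, u ∈ A' → v ∈ A'ᶜ → G.Adj u c → G.Adj u d →
      G.Adj v a → G.Adj v b → G.Adj u v := by
    intro u v hu hv uc ud va vb
    have euv : u ≠ v := fun h => hv (h ▸ hu)
    rcases hu with rfl | rfl | ⟨ea, eb, ec, ed, hTu⟩
    · exact va.symm
    · exact vb.symm
    · rcases hBsh v hv with rfl | rfl | ⟨fa, fb, fc, fd, hTv⟩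
      · exact uc
      · exact ud
      · exact wK2ext C ea eb ec ed fa fb fc fd hTu hTv uc ud va vb euv
  refine ⟨A', A'ᶜ, ⟨Set.union_compl_self _, disjoint_compl_right,
    ⟨a, haA', b, hbA', hab.ne⟩, ⟨c, hcB', d, hdB', hcd.ne⟩, ?_⟩, haA', hbA', hcB', hdB'⟩
  intro x₁ hx₁ x₂ hx₂ y₁ hy₁ y₂ hy₂ e₁ e₂
  obtain ⟨⟨xc, xd⟩, -⟩ := hCR x₁ y₁ hx₁ hy₁ e₁
  obtain ⟨-, ⟨ya, yb⟩⟩ := hCR x₂ y₂ hx₂ hy₂ e₂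
  exact hK2 x₁ y₂ hx₁ hy₂ xc xd ya yb

private lemma obs_swap_bc
    (h1 : ∀ v w : V, G.Adj v w → β v w + β w v = 1)
    (hobs : IsK4Obstruction G β a b c d) : IsK4Obstruction G β a c b d := by
  obtain ⟨hab, hac, had, hbc, hbd, hcd, hC1, hC2, hC3⟩ := hobs
  exact ⟨hac, hab, had, hbc.symm, hcd, hbd, hC3,
    zPermBC (β a b) (β b a) (β b c) (β c b) (β b d) (β d b) (β c d) (β d c)
      (β a c) (β c a) (β a d) (β d a)
      (h1 a b hab) (h1 a c hac) (h1 a d had) (h1 b c hbc) (h1 b d hbd) (h1 c d hcd)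
      hC1 hC2 hC3, hC1⟩

private lemma obs_swap_cd
    (h1 : ∀ v w : V, G.Adj v w → β v w + β w v = 1)
    (hobs : IsK4Obstruction G β a b c d) : IsK4Obstruction G β a b d c := by
  obtain ⟨hab, hac, had, hbc, hbd, hcd, hC1, hC2, hC3⟩ := hobs
  exact ⟨hab, had, hac, hbd, hbc, hcd.symm, hC2, hC1,
    zPermCD (β a b) (β b a) (β b c) (β c b) (β b d) (β d b) (β c d) (β d c)
      (β a c) (β c a) (β a d) (β d a)
      (h1 a b hab) (h1 a c hac) (h1 a d had) (h1 b c hbc) (h1 b d hbd) (h1 c d hcd)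
      hC1 hC2 hC3⟩

private lemma isSplit_symm {X Y : Set V} (h : IsSplit G X Y) : IsSplit G Y X := by
  obtain ⟨hu, hd, hX, hY, hq⟩ := h
  refine ⟨by rw [Set.union_comm]; exact hu, hd.symm, hY, hX, ?_⟩
  intro y₁ hy₁ y₂ hy₂ x₁ hx₁ x₂ hx₂ e₁ e₂
  exact (hq x₂ hx₂ x₁ hx₁ y₂ hy₂ y₁ hy₁ e₂.symm e₁.symm).symm

end NajiSplitAux
open NajiSplitAux in
/-- Every split (partition into two pairs) of a `K₄`-obstruction on `{a,b,c,d}`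
induces a split of `G`. -/
theorem naji_K4_split {V : Type*} (G : SimpleGraph V) (β : V → V → ZMod 2)
    (hβ : NajiSolution G β) (a b c d : V)
    (hobs : IsK4Obstruction G β a b c d)
    (A B : Set V)
    (hpart : A ∪ B = ({a, b, c, d} : Set V)) (hAB : Disjoint A B)
    (hA : A.Nontrivial) (hB : B.Nontrivial) :
    ∃ A' B' : Set V, IsSplit G A' B' ∧ A ⊆ A' ∧ B ⊆ B' := by
  classical
  obtain ⟨h1, h2, h3⟩ := hβ
  have hobs' := hobs
  obtain ⟨hab, hac, had, hbc, hbd, hcd, -, -, -⟩ := hobs'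
  have hndAB : ∀ x : V, x ∈ A → x ∈ B → False :=
    fun x hx hy => Set.disjoint_left.mp hAB hx hy
  have hAK : ∀ x ∈ A, x = a ∨ x = b ∨ x = c ∨ x = d := by
    intro x hx
    have hx' : x ∈ A ∪ B := Or.inl hx
    rw [hpart] at hx'
    simpa using hx'
  have hBK : ∀ x ∈ B, x = a ∨ x = b ∨ x = c ∨ x = d := by
    intro x hx
    have hx' : x ∈ A ∪ B := Or.inr hx
    rw [hpart] at hx'
    simpa using hx'
  have hKmem : ∀ x : V, x = a ∨ x = b ∨ x = c ∨ x = d → x ∈ A ∨ x ∈ B := by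
    intro x hx
    have hx' : x ∈ A ∪ B := by rw [hpart]; simpa using hx
    exact hx'
  have haAB := hKmem a (Or.inl rfl)
  have hbAB := hKmem b (Or.inr (Or.inl rfl))
  have hcAB := hKmem c (Or.inr (Or.inr (Or.inl rfl)))
  have hdAB := hKmem d (Or.inr (Or.inr (Or.inr rfl)))
  have hforceB : ∀ u : V, (∀ x ∈ B, x = u) → False := by
    intro u hu
    obtain ⟨y₁, hy₁, y₂, hy₂, hne⟩ := hB
    exact hne ((hu y₁ hy₁).trans (hu y₂ hy₂).symm)
  have hforceA : ∀ u : V, (∀ x ∈ A, x = u) → False := by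
    intro u hu
    obtain ⟨y₁, hy₁, y₂, hy₂, hne⟩ := hA
    exact hne ((hu y₁ hy₁).trans (hu y₂ hy₂).symm)
  rcases haAB with haA | haB <;> rcases hbAB with hbA | hbB <;>
    rcases hcAB with hcA | hcB <;> rcases hdAB with hdA | hdB
  · -- AAAA
    refine (hforceB a ?_).elim
    intro x hx
    rcases hBK x hx with rfl | rfl | rfl | rfl
    exacts [(hndAB _ haA hx).elim, (hndAB _ hbA hx).elim,
      (hndAB _ hcA hx).elim, (hndAB _ hdA hx).elim]
  · -- AAAB
    refine (hforceB d ?_).elim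
    intro x hx
    rcases hBK x hx with rfl | rfl | rfl | rfl
    exacts [(hndAB _ haA hx).elim, (hndAB _ hbA hx).elim, (hndAB _ hcA hx).elim, rfl]
  · -- AABA
    refine (hforceB c ?_).elim
    intro x hx
    rcases hBK x hx with rfl | rfl | rfl | rfl
    exacts [(hndAB _ haA hx).elim, (hndAB _ hbA hx).elim, rfl, (hndAB _ hdA hx).elim]
  · -- AABB : A ⊇ {a,b}, B ⊇ {c,d}
    obtain ⟨A', B', hsp, pa, pb, pc, pd⟩ := construct h1 h2 h3 hobs
    refine ⟨A', B', hsp, ?_, ?_⟩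
    · intro x hx
      rcases hAK x hx with rfl | rfl | rfl | rfl
      exacts [pa, pb, (hndAB _ hx hcB).elim, (hndAB _ hx hdB).elim]
    · intro x hx
      rcases hBK x hx with rfl | rfl | rfl | rfl
      exacts [(hndAB _ haA hx).elim, (hndAB _ hbA hx).elim, pc, pd]
  · -- ABAA
    refine (hforceB b ?_).elim
    intro x hx
    rcases hBK x hx with rfl | rfl | rfl | rfl
    exacts [(hndAB _ haA hx).elim, rfl, (hndAB _ hcA hx).elim, (hndAB _ hdA hx).elim]
  · -- ABAB : A ⊇ {a,c}, B ⊇ {b,d}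
    obtain ⟨A', B', hsp, pa, pc, pb, pd⟩ := construct h1 h2 h3 (obs_swap_bc h1 hobs)
    refine ⟨A', B', hsp, ?_, ?_⟩
    · intro x hx
      rcases hAK x hx with rfl | rfl | rfl | rfl
      exacts [pa, (hndAB _ hx hbB).elim, pc, (hndAB _ hx hdB).elim]
    · intro x hx
      rcases hBK x hx with rfl | rfl | rfl | rfl
      exacts [(hndAB _ haA hx).elim, pb, (hndAB _ hcA hx).elim, pd]
  · -- ABBA : A ⊇ {a,d}, B ⊇ {b,c}
    obtain ⟨A', B', hsp, pa, pd, pb, pc⟩ :=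
      construct h1 h2 h3 (obs_swap_bc h1 (obs_swap_cd h1 hobs))
    refine ⟨A', B', hsp, ?_, ?_⟩
    · intro x hx
      rcases hAK x hx with rfl | rfl | rfl | rfl
      exacts [pa, (hndAB _ hx hbB).elim, (hndAB _ hx hcB).elim, pd]
    · intro x hx
      rcases hBK x hx with rfl | rfl | rfl | rfl
      exacts [(hndAB _ haA hx).elim, pb, pc, (hndAB _ hdA hx).elim]
  · -- ABBB
    refine (hforceA a ?_).elim
    intro x hx
    rcases hAK x hx with rfl | rfl | rfl | rfl
    exacts [rfl, (hndAB _ hx hbB).elim, (hndAB _ hx hcB).elim, (hndAB _ hx hdB).elim]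
  · -- BAAA
    refine (hforceB a ?_).elim
    intro x hx
    rcases hBK x hx with rfl | rfl | rfl | rfl
    exacts [rfl, (hndAB _ hbA hx).elim, (hndAB _ hcA hx).elim, (hndAB _ hdA hx).elim]
  · -- BAAB : A ⊇ {b,c}, B ⊇ {a,d}
    obtain ⟨A', B', hsp, pa, pd, pb, pc⟩ :=
      construct h1 h2 h3 (obs_swap_bc h1 (obs_swap_cd h1 hobs))
    refine ⟨B', A', isSplit_symm hsp, ?_, ?_⟩
    · intro x hx
      rcases hAK x hx with rfl | rfl | rfl | rfl
      exacts [(hndAB _ hx haB).elim, pb, pc, (hndAB _ hx hdB).elim]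
    · intro x hx
      rcases hBK x hx with rfl | rfl | rfl | rfl
      exacts [pa, (hndAB _ hbA hx).elim, (hndAB _ hcA hx).elim, pd]
  · -- BABA : A ⊇ {b,d}, B ⊇ {a,c}
    obtain ⟨A', B', hsp, pa, pc, pb, pd⟩ := construct h1 h2 h3 (obs_swap_bc h1 hobs)
    refine ⟨B', A', isSplit_symm hsp, ?_, ?_⟩
    · intro x hx
      rcases hAK x hx with rfl | rfl | rfl | rfl
      exacts [(hndAB _ hx haB).elim, pb, (hndAB _ hx hcB).elim, pd]
    · intro x hx
      rcases hBK x hx with rfl | rfl | rfl | rfl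
      exacts [pa, (hndAB _ hbA hx).elim, pc, (hndAB _ hdA hx).elim]
  · -- BABB
    refine (hforceA b ?_).elim
    intro x hx
    rcases hAK x hx with rfl | rfl | rfl | rfl
    exacts [(hndAB _ hx haB).elim, rfl, (hndAB _ hx hcB).elim, (hndAB _ hx hdB).elim]
  · -- BBAA : A ⊇ {c,d}, B ⊇ {a,b}
    obtain ⟨A', B', hsp, pa, pb, pc, pd⟩ := construct h1 h2 h3 hobs
    refine ⟨B', A', isSplit_symm hsp, ?_, ?_⟩
    · intro x hx
      rcases hAK x hx with rfl | rfl | rfl | rfl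
      exacts [(hndAB _ hx haB).elim, (hndAB _ hx hbB).elim, pc, pd]
    · intro x hx
      rcases hBK x hx with rfl | rfl | rfl | rfl
      exacts [pa, pb, (hndAB _ hcA hx).elim, (hndAB _ hdA hx).elim]
  · -- BBAB
    refine (hforceA c ?_).elim
    intro x hx
    rcases hAK x hx with rfl | rfl | rfl | rfl
    exacts [(hndAB _ hx haB).elim, (hndAB _ hx hbB).elim, rfl, (hndAB _ hx hdB).elim]
  · -- BBBA
    refine (hforceA d ?_).elim
    intro x hx
    rcases hAK x hx with rfl | rfl | rfl | rfl
    exacts [(hndAB _ hx haB).elim, (hndAB _ hx hbB).elim, (hndAB _ hx hcB).elim, rfl]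
  · -- BBBB
    refine (hforceA a ?_).elim
    intro x hx
    rcases hAK x hx with rfl | rfl | rfl | rfl
    exacts [(hndAB _ hx haB).elim, (hndAB _ hx hbB).elim,
      (hndAB _ hx hcB).elim, (hndAB _ hx hdB).elim]
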